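/- Virial theorem, periodic version: let q(t) be a periodic solution of Newton's N-body equations defined on all of ℝ with period T > 0 and total energy E. Then E < 0, and writing E = −h with h > 0, the time averages over one period satisfy (1/T)∫₀^T U(q(t)) dt = 2h and (1/T)∫₀^T K(t) dt = h. -/

import Mathlib

open Finset Filter MeasureTheory
open scoped RealInnerProductSpace

noncomputable section

/-- Configuration space of `N` bodies in `ℝ³`. -/
abbrev Config (N : ℕ) := Fin N → EuclideanSpace ℝ (Fin 3)

/-- A configuration is collision-free if all bodies occupy distinct positions. -/
def CollisionFree {N : ℕ} (q : Config N) : Prop :=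
  ∀ a b : Fin N, a ≠ b → q a ≠ q b

/-- The Newtonian potential `U(q) = G ∑_{a<b} m_a m_b / |q_a - q_b|`. -/
def potU {N : ℕ} (G : ℝ) (m : Fin N → ℝ) (q : Config N) : ℝ :=
  G * ∑ a : Fin N, ∑ b : Fin N, if a < b then m a * m b / ‖q a - q b‖ else 0

/-- Kinetic energy `K = (1/2) ∑_a m_a |v_a|²`. -/
def kinE {N : ℕ} (m : Fin N → ℝ) (v : Config N) : ℝ :=
  (1 / 2) * ∑ a : Fin N, m a * ‖v a‖ ^ 2

/-- Moment of inertia `I = ∑_a m_a |q_a|²`. -/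
def momI {N : ℕ} (m : Fin N → ℝ) (q : Config N) : ℝ :=
  ∑ a : Fin N, m a * ‖q a‖ ^ 2

/-- `q, v : ℝ → Config N` is a solution of Newton's N-body equations on `J`:
at each time in `J` the configuration is collision-free, `v` is the derivative
of `q`, and the acceleration satisfies
`m_a q̈_a = G ∑_{b ≠ a} m_a m_b (q_b - q_a)/|q_b - q_a|³`. -/
def IsSolutionOn {N : ℕ} (G : ℝ) (m : Fin N → ℝ) (J : Set ℝ)
    (q v : ℝ → Config N) : Prop :=
  ∀ t ∈ J,
    CollisionFree (q t) ∧
    (∀ a, HasDerivAt (fun s => q s a) (v t a) t) ∧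
    (∀ a, ∃ acc : EuclideanSpace ℝ (Fin 3),
      HasDerivAt (fun s => v s a) acc t ∧
      m a • acc = ∑ b ∈ univ.filter (fun b => b ≠ a),
        (G * m a * m b / ‖q t b - q t a‖ ^ 3) • (q t b - q t a))

/-- Virial theorem, periodic version: a periodic solution of the
N-body problem has negative energy `E = -h`, and the time averages over one
period satisfy `⟨U⟩ = 2h` and `⟨K⟩ = h`. -/
lemma inner_pair (x y : EuclideanSpace ℝ (Fin 3)) :
    ⟪x, y - x⟫ + ⟪y, x - y⟫ = -‖x - y‖ ^ 2 := by
  have h := norm_sub_sq_real x y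
  have hc : ⟪x, y⟫ = ⟪y, x⟫ := real_inner_comm y x
  simp only [inner_sub_right, real_inner_self_eq_norm_sq] at *
  linarith

lemma sum_ne_eq_two_mul_sum_lt {N : ℕ} (f : Fin N → Fin N → ℝ)
    (hf : ∀ a b, f a b = f b a) :
    ∑ a : Fin N, ∑ b : Fin N, (if a ≠ b then f a b else 0)
      = 2 * ∑ a : Fin N, ∑ b : Fin N, (if a < b then f a b else 0) := by
  have h1 : ∀ a b : Fin N, (if a ≠ b then f a b else 0)
      = (if a < b then f a b else 0) + (if b < a then f a b else 0) := by
    intro a b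
    rcases lt_trichotomy a b with h|h|h
    · simp [h, h.ne, not_lt_of_gt h]
    · simp [h]
    · simp [h, h.ne', not_lt_of_gt h]
  simp only [h1, Finset.sum_add_distrib]
  have h2 : ∑ a : Fin N, ∑ b : Fin N, (if b < a then f a b else 0)
      = ∑ a : Fin N, ∑ b : Fin N, (if a < b then f a b else 0) := by
    rw [Finset.sum_comm]
    exact Finset.sum_congr rfl fun a _ => Finset.sum_congr rfl fun b _ => by rw [hf]
  rw [h2]; ring

lemma virial_id {N : ℕ} (G : ℝ) (m : Fin N → ℝ) (q : Config N) (hq : CollisionFree q) :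
    ∑ a : Fin N, ⟪q a, ∑ b ∈ univ.filter (fun b => b ≠ a),
        (G * m a * m b / ‖q b - q a‖ ^ 3) • (q b - q a)⟫ = - potU G m q := by
  have hne : ∀ a b : Fin N, a ≠ b → ‖q a - q b‖ ≠ 0 := fun a b h =>
    norm_ne_zero_iff.mpr (sub_ne_zero.mpr (hq a b h))
  have step1 : ∀ a : Fin N, ⟪q a, ∑ b ∈ univ.filter (fun b => b ≠ a),
        (G * m a * m b / ‖q b - q a‖ ^ 3) • (q b - q a)⟫
      = ∑ b : Fin N, (if a ≠ b then
          (G * m a * m b / ‖q a - q b‖ ^ 3) * ⟪q a, q b - q a⟫ else 0) := by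
    intro a
    rw [inner_sum, Finset.sum_filter]
    refine Finset.sum_congr rfl fun b _ => ?_
    by_cases h : b = a
    · simp [h]
    · simp only [h, if_neg, ne_eq, not_false_iff, if_pos, Ne.symm h]
      rw [real_inner_smul_right, norm_sub_rev (q b) (q a)]
  simp only [step1]
  set g : Fin N → Fin N → ℝ := fun a b =>
    (G * m a * m b / ‖q a - q b‖ ^ 3) * ⟪q a, q b - q a⟫ with hg
  have swap : ∑ a : Fin N, ∑ b : Fin N, (if a ≠ b then g a b else 0)
      = ∑ a : Fin N, ∑ b : Fin N, (if a ≠ b then g b a else 0) := by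
    rw [Finset.sum_comm]
    exact Finset.sum_congr rfl fun a _ => Finset.sum_congr rfl fun b _ => by
      simp [ne_comm]
  have pairsum : ∀ a b : Fin N, a ≠ b →
      g a b + g b a = -(G * (m a * m b / ‖q a - q b‖)) := by
    intro a b h
    have hr := hne a b h
    have hrev : ‖q b - q a‖ = ‖q a - q b‖ := norm_sub_rev _ _
    have hip := inner_pair (q a) (q b)
    simp only [hg]
    rw [hrev]
    have hcoef : G * m b * m a / ‖q a - q b‖ ^ 3
        = G * m a * m b / ‖q a - q b‖ ^ 3 := by ring
    rw [hcoef, ← mul_add, hip]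
    field_simp
  have expand : ∀ a b : Fin N,
      (if a ≠ b then g a b else 0) + (if a ≠ b then g b a else 0)
      = if a ≠ b then -(G * (m a * m b / ‖q a - q b‖)) else 0 := by
    intro a b; by_cases h : a ≠ b
    · simp only [if_pos h]; exact pairsum a b h
    · simp [h]
  set S := ∑ a : Fin N, ∑ b : Fin N, (if a ≠ b then g a b else 0) with hS
  have two_lhs : 2 * S
      = ∑ a : Fin N, ∑ b : Fin N,
          (if a ≠ b then -(G * (m a * m b / ‖q a - q b‖)) else 0) := by
    rw [two_mul]
    nth_rewrite 2 [swap]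
    rw [hS, ← Finset.sum_add_distrib]
    rw [show (∑ a : Fin N, ((∑ b : Fin N, (if a ≠ b then g a b else 0))
        + ∑ b : Fin N, (if a ≠ b then g b a else 0)))
      = ∑ a : Fin N, ∑ b : Fin N, ((if a ≠ b then g a b else 0)
        + (if a ≠ b then g b a else 0)) from
      Finset.sum_congr rfl fun a _ => (Finset.sum_add_distrib).symm]
    simp only [expand]
  have negite : ∀ a b : Fin N,
      (if a ≠ b then -(G * (m a * m b / ‖q a - q b‖)) else 0)
      = -(if a ≠ b then G * (m a * m b / ‖q a - q b‖) else 0) := by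
    intro a b; split <;> simp
  have hsym : ∀ a b : Fin N, G * (m a * m b / ‖q a - q b‖)
      = G * (m b * m a / ‖q b - q a‖) := by
    intro a b; rw [norm_sub_rev]; ring
  have sumpot : ∑ a : Fin N, ∑ b : Fin N,
      (if a ≠ b then G * (m a * m b / ‖q a - q b‖) else 0) = 2 * potU G m q := by
    rw [sum_ne_eq_two_mul_sum_lt _ fun a b => hsym a b, potU]
    simp only [Finset.mul_sum, mul_ite, mul_zero]

  simp only [negite, Finset.sum_neg_distrib, sumpot] at two_lhs
  linarith

theorem virial_periodic
    (N : ℕ) (hN : 2 ≤ N) (G : ℝ) (hG : 0 < G)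
    (m : Fin N → ℝ) (hm : ∀ a, 0 < m a)
    (q v : ℝ → Config N)
    (hsol : IsSolutionOn G m Set.univ q v)
    (T : ℝ) (hT : 0 < T) (hper : ∀ t : ℝ, q (t + T) = q t)
    (E : ℝ) (hE : ∀ t : ℝ, kinE m (v t) - potU G m (q t) = E) :
    E < 0 ∧
    (1 / T) * (∫ t in (0:ℝ)..T, potU G m (q t)) = 2 * (-E) ∧
    (1 / T) * (∫ t in (0:ℝ)..T, kinE m (v t)) = -E := by
  have hcf : ∀ t, CollisionFree (q t) := fun t => (hsol t trivial).1
  have hq' : ∀ t a, HasDerivAt (fun s => q s a) (v t a) t := fun t => (hsol t trivial).2.1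
  have hacc' : ∀ t a, ∃ acc : EuclideanSpace ℝ (Fin 3),
      HasDerivAt (fun s => v s a) acc t ∧
      m a • acc = ∑ b ∈ univ.filter (fun b => b ≠ a),
        (G * m a * m b / ‖q t b - q t a‖ ^ 3) • (q t b - q t a) :=
    fun t => (hsol t trivial).2.2
  -- continuity
  have hqc : ∀ a, Continuous fun t => q t a := fun a =>
    continuous_iff_continuousAt.mpr fun t => (hq' t a).continuousAt
  have hvc : ∀ a, Continuous fun t => v t a := fun a =>
    continuous_iff_continuousAt.mpr fun t => (hacc' t a).choose_spec.1.continuousAt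
  have hKc : Continuous fun t => kinE m (v t) := by
    unfold kinE
    exact continuous_const.mul (continuous_finset_sum _ fun a _ =>
      continuous_const.mul (((hvc a).norm).pow 2))
  have hUc : Continuous fun t => potU G m (q t) := by
    unfold potU
    refine continuous_const.mul (continuous_finset_sum _ fun a _ =>
      continuous_finset_sum _ fun b _ => ?_)
    by_cases hab : a < b
    · simp only [if_pos hab]
      exact continuous_const.div ((hqc a).sub (hqc b)).norm fun t =>
        norm_ne_zero_iff.mpr (sub_ne_zero.mpr (hcf t a b hab.ne))
    · simp only [if_neg hab]; exact continuous_const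
  -- the virial function p and its derivative
  set p : ℝ → ℝ := fun t => ∑ a : Fin N, m a * ⟪q t a, v t a⟫ with hpdef
  have hp : ∀ t, HasDerivAt p (2 * kinE m (v t) - potU G m (q t)) t := by
    intro t
    choose acc hacc1 hacc2 using hacc' t
    have hterm : ∀ a ∈ (univ : Finset (Fin N)),
        HasDerivAt (fun s => m a * ⟪q s a, v s a⟫)
          (m a * (⟪q t a, acc a⟫ + ⟪v t a, v t a⟫)) t := fun a _ =>
      HasDerivAt.const_mul (m a) ((hq' t a).inner ℝ (hacc1 a))
    have hsum := HasDerivAt.fun_sum hterm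
    have hval : ∑ a : Fin N, m a * (⟪q t a, acc a⟫ + ⟪v t a, v t a⟫)
        = 2 * kinE m (v t) - potU G m (q t) := by
      have hper' : ∀ a : Fin N, m a * (⟪q t a, acc a⟫ + ⟪v t a, v t a⟫)
          = ⟪q t a, ∑ b ∈ univ.filter (fun b => b ≠ a),
              (G * m a * m b / ‖q t b - q t a‖ ^ 3) • (q t b - q t a)⟫
            + m a * ‖v t a‖ ^ 2 := by
        intro a
        rw [← hacc2 a, real_inner_smul_right, real_inner_self_eq_norm_sq]
        ring
      simp only [hper', Finset.sum_add_distrib]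
      rw [virial_id G m (q t) (hcf t), kinE]
      ring
    exact hval ▸ hsum
  -- periodicity of v
  have hvper : ∀ t, v (t + T) = v t := by
    intro t; funext a
    have h1 : HasDerivAt (fun s => q s a) (v (t + T) a) (t + T) := hq' (t + T) a
    have h2 : HasDerivAt ((fun s => q s a) ∘ (fun s => s + T))
        ((1:ℝ) • v (t + T) a) t := h1.scomp t ((hasDerivAt_id t).add_const T)
    have hfe : ((fun s => q s a) ∘ (fun s => s + T)) = fun s => q s a := by
      funext s; exact congrFun (hper s) a
    rw [hfe, one_smul] at h2
    exact h2.unique (hq' t a)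
  -- FTC over one period
  have hcont : Continuous fun t => 2 * kinE m (v t) - potU G m (q t) :=
    (continuous_const.mul hKc).sub hUc
  have hFTC : (∫ t in (0:ℝ)..T, (2 * kinE m (v t) - potU G m (q t))) = p T - p 0 :=
    intervalIntegral.integral_eq_sub_of_hasDerivAt (fun t _ => hp t)
      (hcont.intervalIntegrable 0 T)
  have hpTp0 : p T = p 0 := by
    have hqT : q T = q 0 := by have := hper 0; rwa [zero_add] at this
    have hvT : v T = v 0 := by have := hvper 0; rwa [zero_add] at this
    simp only [hpdef, hqT, hvT]
  have hIK : IntervalIntegrable (fun t => kinE m (v t)) volume 0 T :=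
    hKc.intervalIntegrable 0 T
  have hIU : IntervalIntegrable (fun t => potU G m (q t)) volume 0 T :=
    hUc.intervalIntegrable 0 T
  have hsplit : (∫ t in (0:ℝ)..T, (2 * kinE m (v t) - potU G m (q t)))
      = 2 * (∫ t in (0:ℝ)..T, kinE m (v t)) - ∫ t in (0:ℝ)..T, potU G m (q t) := by
    rw [intervalIntegral.integral_sub (hIK.const_mul 2) hIU,
      intervalIntegral.integral_const_mul]
  have hEint : (∫ t in (0:ℝ)..T, kinE m (v t)) - (∫ t in (0:ℝ)..T, potU G m (q t))
      = T * E := by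
    rw [← intervalIntegral.integral_sub hIK hIU]
    simp only [hE]
    rw [intervalIntegral.integral_const]
    simp [smul_eq_mul]
  -- positivity of U
  have hUpos : ∀ t, 0 < potU G m (q t) := by
    intro t
    unfold potU
    apply mul_pos hG
    have a0 : Fin N := ⟨0, by omega⟩
    set i : Fin N := ⟨0, by omega⟩
    set j : Fin N := ⟨1, by omega⟩
    have hij : i < j := by simp [i, j, Fin.lt_def]
    have hnn : ∀ a b : Fin N,
        0 ≤ (if a < b then m a * m b / ‖q t a - q t b‖ else 0) := by
      intro a b; split
      · exact div_nonneg (mul_nonneg (hm a).le (hm b).le) (norm_nonneg _)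
      · exact le_refl 0
    refine Finset.sum_pos' (fun a _ => Finset.sum_nonneg fun b _ => hnn a b)
      ⟨i, Finset.mem_univ _, ?_⟩
    refine Finset.sum_pos' (fun b _ => hnn i b) ⟨j, Finset.mem_univ _, ?_⟩
    rw [if_pos hij]
    exact div_pos (mul_pos (hm i) (hm j))
      (norm_pos_iff.mpr (sub_ne_zero.mpr (hcf t i j hij.ne)))
  have hApos : 0 < ∫ t in (0:ℝ)..T, potU G m (q t) :=
    intervalIntegral.intervalIntegral_pos_of_pos_on hIU (fun t _ => hUpos t) hT
  set A := ∫ t in (0:ℝ)..T, potU G m (q t)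
  set B := ∫ t in (0:ℝ)..T, kinE m (v t)
  have h1 : 2 * B - A = 0 := by rw [← hsplit, hFTC, hpTp0]; ring
  have h2 : B - A = T * E := hEint
  have hEneg : E < 0 := by nlinarith
  refine ⟨hEneg, ?_, ?_⟩
  · have hA : A = -2 * T * E := by linarith
    rw [hA]; field_simp
  · have hB : B = -T * E := by linarith
    rw [hB]; field_simp
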